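/- Every fraction of the form p²/(pq−1) with p > q ≥ 1 coprime admits a Hirzebruch–Jung continued fraction expansion [b_1,...,b_ℓ] obtained from [4] by a finite sequence of the operations L and R. -/

import Mathlib

/-- Value of a negative (Hirzebruch–Jung) continued fraction
`b₁ - 1/(b₂ - 1/(b₃ - ⋯))`, with the convention `hjVal [] = 0`. -/
def hjVal : List ℚ → ℚ
  | [] => 0
  | b :: t => b - (hjVal t)⁻¹

/-- The operation `L[b₁,…,b_ℓ] = [2, b₁, …, b_{ℓ-1}, b_ℓ + 1]`. -/
def Lop (l : List ℤ) : List ℤ := 2 :: (l.dropLast ++ [l.getLast! + 1])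

/-- The operation `R[b₁,…,b_ℓ] = [b₁+1, b₂, …, b_ℓ, 2]`. -/
def Rop : List ℤ → List ℤ
  | [] => []
  | a :: t => (a + 1) :: (t ++ [2])

/-- T-strings: generated from `[4]` by the operations `L` and `R`. -/
inductive TString : List ℤ → Prop
  | base : TString [4]
  | left {l : List ℤ} : TString l → TString (Lop l)
  | right {l : List ℤ} : TString l → TString (Rop l)

/-- Continuant matrix `M(b₁)⋯M(b_ℓ)` where `M(b) = [[b,-1],[1,0]]`,
stored as `(a, b, c, d)` for `[[a,b],[c,d]]`. -/
def mat : List ℤ → ℤ × ℤ × ℤ × ℤ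
  | [] => (1, 0, 0, 1)
  | b :: t => (b * (mat t).1 - (mat t).2.2.1, b * (mat t).2.1 - (mat t).2.2.2,
      (mat t).1, (mat t).2.1)

lemma getLast!_concat' (t : List ℤ) (x : ℤ) : (t ++ [x]).getLast! = x :=
  List.getLast!_of_getLast? (List.getLast?_concat)

lemma mat_concat (t : List ℤ) (x : ℤ) :
    mat (t ++ [x]) = ((mat t).1 * x + (mat t).2.1, -(mat t).1,
      (mat t).2.2.1 * x + (mat t).2.2.2, -(mat t).2.2.1) := by
  induction t with
  | nil => simp [mat]
  | cons b t ih =>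
    simp only [List.cons_append, mat, List.append_eq, ih, Prod.mk.injEq]
    exact ⟨by ring, by ring, trivial⟩

lemma mat_Lop (t : List ℤ) (x : ℤ) :
    mat (Lop (t ++ [x])) =
      (2 * (mat (t ++ [x])).1 - 2 * (mat (t ++ [x])).2.1
          - (mat (t ++ [x])).2.2.1 + (mat (t ++ [x])).2.2.2,
        2 * (mat (t ++ [x])).2.1 - (mat (t ++ [x])).2.2.2,
        (mat (t ++ [x])).1 - (mat (t ++ [x])).2.1,
        (mat (t ++ [x])).2.1) := by
  simp only [Lop, List.dropLast_concat, getLast!_concat']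
  simp only [mat, mat_concat, Prod.mk.injEq]
  refine ⟨by ring, trivial, by ring, trivial⟩

lemma mat_Rop (a : ℤ) (t : List ℤ) :
    mat (Rop (a :: t)) =
      (2 * (mat (a :: t)).1 + (mat (a :: t)).2.1
          + 2 * (mat (a :: t)).2.2.1 + (mat (a :: t)).2.2.2,
        -((mat (a :: t)).1 + (mat (a :: t)).2.2.1),
        2 * (mat (a :: t)).2.2.1 + (mat (a :: t)).2.2.2,
        -(mat (a :: t)).2.2.1) := by
  simp only [Rop, mat, mat_concat, Prod.mk.injEq]
  refine ⟨by ring, by ring, by ring, trivial⟩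

lemma tstring_facts {l : List ℤ} (h : TString l) : l ≠ [] ∧ ∀ x ∈ l, 2 ≤ x := by
  induction h with
  | base => simp
  | @left l h ih =>
    obtain ⟨hne, hx⟩ := ih
    rcases List.eq_nil_or_concat l with rfl | ⟨t, y, rfl⟩
    · exact absurd rfl hne
    rw [List.concat_eq_append] at *
    constructor
    · simp [Lop]
    · intro z hz
      simp only [Lop, List.dropLast_concat, getLast!_concat', List.mem_cons,
        List.mem_append, List.mem_singleton] at hz
      rcases hz with rfl | hz | hz
      · norm_num
      · exact hx z (by simp [hz])
      · simp only [List.mem_cons, List.not_mem_nil, or_false] at hz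
        have := hx y (by simp)
        omega
  | @right l h ih =>
    obtain ⟨hne, hx⟩ := ih
    rcases l with _ | ⟨a, t⟩
    · exact absurd rfl hne
    constructor
    · simp [Rop]
    · intro z hz
      simp only [Rop, List.mem_cons, List.mem_append, List.mem_singleton] at hz
      rcases hz with rfl | hz | hz
      · have := hx a (by simp)
        omega
      · exact hx z (by simp [hz])
      · simp only [List.mem_cons, List.not_mem_nil, or_false] at hz
        omega

lemma hj_key : ∀ l : List ℤ, l ≠ [] → (∀ x ∈ l, 2 ≤ x) →
    0 < (mat l).2.2.1 ∧ (mat l).2.2.1 < (mat l).1 ∧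
      hjVal (l.map (fun x : ℤ => (x : ℚ))) =
        ((mat l).1 : ℚ) / ((mat l).2.2.1 : ℚ) := by
  intro l
  induction l with
  | nil => intro h; exact absurd rfl h
  | cons b t ih =>
    intro _ hx
    have hb : 2 ≤ b := hx b (by simp)
    rcases t with _ | ⟨c, s⟩
    · refine ⟨by norm_num [mat], by norm_num [mat]; omega, ?_⟩
      simp [mat, hjVal]
    · obtain ⟨hC, hCA, hval⟩ := ih (by simp) (fun x hxm => hx x (by simp [hxm]))
      set A := (mat (c :: s)).1 with hA
      set C := (mat (c :: s)).2.2.1 with hCdef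
      have hA0 : 0 < A := lt_trans hC hCA
      have hmat1 : (mat (b :: c :: s)).1 = b * A - C := rfl
      have hmat2 : (mat (b :: c :: s)).2.2.1 = A := rfl
      refine ⟨by rw [hmat2]; exact hA0, by rw [hmat1, hmat2]; nlinarith, ?_⟩
      have hAQ : (A : ℚ) ≠ 0 := by exact_mod_cast hA0.ne'
      have hCQ : (C : ℚ) ≠ 0 := by exact_mod_cast hC.ne'
      rw [hmat1, hmat2]
      show (b : ℚ) - (hjVal ((c :: s).map (fun x : ℤ => (x : ℚ))))⁻¹ = _
      rw [hval]
      rw [inv_div]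
      push_cast
      field_simp

lemma key : ∀ p : ℕ, ∀ q : ℕ, 1 ≤ q → q < p → Nat.Coprime p q →
    ∃ l, TString l ∧ mat l =
      ((p : ℤ) ^ 2, 1 - (p : ℤ) * ((p : ℤ) - (q : ℤ)),
        (p : ℤ) * (q : ℤ) - 1, 1 - (q : ℤ) * ((p : ℤ) - (q : ℤ))) := by
  intro p
  induction p using Nat.strong_induction_on with
  | _ p ih =>
    intro q hq hqp hco
    rcases lt_trichotomy p (2 * q) with h | h | h
    · -- p < 2q : come from (q, 2q - p) via Lop
      have hco' : Nat.Coprime q (2 * q - p) := by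
        have h1 : Nat.gcd q (2 * q - p) ∣ q := Nat.gcd_dvd_left _ _
        have h2 : Nat.gcd q (2 * q - p) ∣ 2 * q - p := Nat.gcd_dvd_right _ _
        have h3 : Nat.gcd q (2 * q - p) ∣ 2 * q := Dvd.dvd.mul_left h1 2
        have h4 : Nat.gcd q (2 * q - p) ∣ p := by
          have he : 2 * q - (2 * q - p) = p := by omega
          have h5 := Nat.dvd_sub h3 h2
          rwa [he] at h5
        have := Nat.dvd_gcd h4 h1
        rw [hco] at this
        exact Nat.dvd_one.mp this
      obtain ⟨l, hT, hm⟩ := ih q hqp (2 * q - p) (by omega) (by omega) hco'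
      have hne : l ≠ [] := (tstring_facts hT).1
      rcases List.eq_nil_or_concat l with rfl | ⟨t, y, rfl⟩
      · exact absurd rfl hne
      rw [List.concat_eq_append] at *
      refine ⟨Lop (t ++ [y]), hT.left, ?_⟩
      rw [mat_Lop, hm]
      have hc : ((2 * q - p : ℕ) : ℤ) = 2 * (q : ℤ) - (p : ℤ) := by omega
      simp only [hc, Prod.mk.injEq]
      refine ⟨by ring, by ring, by ring, by ring⟩
    · -- p = 2q : base case
      have hq1 : q = 1 := by
        have h4 : q ∣ p := ⟨2, by omega⟩
        have := Nat.dvd_gcd h4 dvd_rfl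
        rw [hco] at this
        exact Nat.dvd_one.mp this
      have hp2 : p = 2 := by omega
      subst hq1 hp2
      refine ⟨[4], TString.base, ?_⟩
      norm_num [mat]
    · -- p > 2q : come from (p - q, q) via Rop
      have hco' : Nat.Coprime (p - q) q := by
        have h1 : Nat.gcd (p - q) q ∣ p - q := Nat.gcd_dvd_left _ _
        have h2 : Nat.gcd (p - q) q ∣ q := Nat.gcd_dvd_right _ _
        have h4 : Nat.gcd (p - q) q ∣ p := by
          have he : (p - q) + q = p := by omega
          have h5 := Nat.dvd_add h1 h2
          rwa [he] at h5
        have := Nat.dvd_gcd h4 h2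
        rw [hco] at this
        exact Nat.dvd_one.mp this
      obtain ⟨l, hT, hm⟩ := ih (p - q) (by omega) q hq (by omega) hco'
      have hne : l ≠ [] := (tstring_facts hT).1
      rcases l with _ | ⟨a, t⟩
      · exact absurd rfl hne
      refine ⟨Rop (a :: t), hT.right, ?_⟩
      rw [mat_Rop, hm]
      have hc : ((p - q : ℕ) : ℤ) = (p : ℤ) - (q : ℤ) := by omega
      simp only [hc, Prod.mk.injEq]
      refine ⟨by ring, by ring, by ring, by ring⟩

/-- Every fraction `p²/(pq-1)` with `p > q ≥ 1` coprime admits a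
Hirzebruch–Jung continued fraction expansion obtained from `[4]` by a finite
sequence of the operations `L` and `R`. -/
theorem hj_tstring (p q : ℕ) (hq : 1 ≤ q) (hqp : q < p) (hco : Nat.Coprime p q) :
    ∃ l : List ℤ, TString l ∧
      hjVal (l.map (fun x : ℤ => (x : ℚ))) =
        (p : ℚ) ^ 2 / ((p : ℚ) * (q : ℚ) - 1) := by
  obtain ⟨l, hT, hm⟩ := key p q hq hqp hco
  obtain ⟨hne, hx⟩ := tstring_facts hT
  obtain ⟨_, _, hval⟩ := hj_key l hne hx
  refine ⟨l, hT, ?_⟩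
  rw [hval, hm]
  push_cast
  ring
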